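/- For every integer n ≥ 3, Σ_{k=1}^{n} cos²(π(2k-1)/(2n)) / (1 - cos²(π(2k-1)/(2n)))^{3/2} > Σ_{k=1}^{n-1} csc(πk/n). -/

import Mathlib

open Real Finset

private lemma csc_midpoint {x y : ℝ} (hx0 : 0 < x) (hxp : x < π) (hy0 : 0 < y) (hyp : y < π) :
    1 / Real.sin ((x + y) / 2) ≤ (1 / Real.sin x + 1 / Real.sin y) / 2 := by
  have hsx : 0 < Real.sin x := Real.sin_pos_of_pos_of_lt_pi hx0 hxp
  have hsy : 0 < Real.sin y := Real.sin_pos_of_pos_of_lt_pi hy0 hyp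
  have hsm : 0 < Real.sin ((x + y) / 2) :=
    Real.sin_pos_of_pos_of_lt_pi (by linarith) (by linarith)
  have hadd : Real.sin x + Real.sin y
      = 2 * Real.sin ((x + y) / 2) * Real.cos ((x - y) / 2) := by
    have h1 := Real.sin_add ((x + y) / 2) ((x - y) / 2)
    have h2 := Real.sin_sub ((x + y) / 2) ((x - y) / 2)
    have hx : (x + y) / 2 + (x - y) / 2 = x := by ring
    have hy : (x + y) / 2 - (x - y) / 2 = y := by ring
    rw [hx] at h1; rw [hy] at h2; linarith
  have hc : Real.cos ((x - y) / 2) ≤ 1 := Real.cos_le_one _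
  have hle : Real.sin x + Real.sin y ≤ 2 * Real.sin ((x + y) / 2) := by nlinarith
  rw [div_add_div _ _ hsx.ne' hsy.ne', div_div,
    div_le_div_iff₀ hsm (by positivity)]
  nlinarith [sq_nonneg (Real.sin x - Real.sin y),
    mul_le_mul_of_nonneg_left hle (by positivity : (0:ℝ) ≤ Real.sin x + Real.sin y)]

private lemma sum_shift (f : ℕ → ℝ) (m : ℕ) :
    ∑ k ∈ Finset.Icc 1 m, f (k + 1) = ∑ k ∈ Finset.Icc 2 (m + 1), f k := by
  induction m with
  | zero => simp
  | succ m ih =>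
      rw [Finset.sum_Icc_succ_top (show 1 ≤ m + 1 by omega) (fun k => f (k + 1)), ih,
        Finset.sum_Icc_succ_top (show 2 ≤ m + 1 + 1 by omega) f]

private lemma sum_head (f : ℕ → ℝ) (m : ℕ) (hm : 1 ≤ m) :
    ∑ k ∈ Finset.Icc 1 m, f k = f 1 + ∑ k ∈ Finset.Icc 2 m, f k := by
  induction m with
  | zero => omega
  | succ m ih =>
      rcases Nat.eq_zero_or_pos m with h | h
      · subst h; simp
      · rw [Finset.sum_Icc_succ_top (by omega) f, ih h,
          Finset.sum_Icc_succ_top (by omega) f]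
        ring

theorem gzero_gt_one (n : ℕ) (hn : 3 ≤ n) :
    (∑ k ∈ Finset.Icc 1 n,
        Real.cos (π * (2 * k - 1) / (2 * n)) ^ 2 /
          (1 - Real.cos (π * (2 * k - 1) / (2 * n)) ^ 2) ^ ((3 : ℝ) / 2)) >
      ∑ k ∈ Finset.Icc 1 (n - 1), 1 / Real.sin (π * k / n) := by
  have hπ := Real.pi_pos
  have hnR : (3:ℝ) ≤ (n:ℝ) := by exact_mod_cast hn
  have hn0 : (0:ℝ) < n := by linarith
  set a : ℕ → ℝ := fun k => 1 / Real.sin (π * (2 * k - 1) / (2 * n)) with ha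
  -- angle bounds
  have hθ : ∀ k : ℕ, 1 ≤ k → k ≤ n →
      0 < π * (2 * k - 1) / (2 * n) ∧ π * (2 * k - 1) / (2 * n) < π := by
    intro k h1 h2
    have h1' : (1:ℝ) ≤ (k:ℝ) := by exact_mod_cast h1
    have h2' : (k:ℝ) ≤ (n:ℝ) := by exact_mod_cast h2
    constructor
    · apply div_pos (by nlinarith) (by linarith)
    · rw [div_lt_iff₀ (by linarith)]
      nlinarith
  have hsin : ∀ k : ℕ, 1 ≤ k → k ≤ n → 0 < Real.sin (π * (2 * k - 1) / (2 * n)) := by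
    intro k h1 h2
    obtain ⟨hl, hr⟩ := hθ k h1 h2
    exact Real.sin_pos_of_pos_of_lt_pi hl hr
  have ha1 : ∀ k : ℕ, 1 ≤ k → k ≤ n → 1 ≤ a k := by
    intro k h1 h2
    have hs := hsin k h1 h2
    have hak : a k = 1 / Real.sin (π * (2 * k - 1) / (2 * n)) := rfl
    rw [hak, le_div_iff₀ hs, one_mul]
    exact Real.sin_le_one _
  -- rewrite the LHS terms
  have hL : ∀ k ∈ Finset.Icc 1 n,
      Real.cos (π * (2 * k - 1) / (2 * n)) ^ 2 /
        (1 - Real.cos (π * (2 * k - 1) / (2 * n)) ^ 2) ^ ((3 : ℝ) / 2)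
      = a k ^ 3 - a k := by
    intro k hk
    obtain ⟨h1, h2⟩ := Finset.mem_Icc.mp hk
    have hs := hsin k h1 h2
    set s := Real.sin (π * (2 * k - 1) / (2 * n)) with hsdef
    have e1 : 1 - Real.cos (π * (2 * k - 1) / (2 * n)) ^ 2 = s ^ 2 := by
      have := Real.sin_sq_add_cos_sq (π * (2 * k - 1) / (2 * n))
      rw [hsdef]; linarith
    rw [e1]
    have e2 : (s ^ 2 : ℝ) ^ ((3:ℝ)/2) = s ^ 3 := by
      rw [← Real.rpow_natCast s 2, ← Real.rpow_mul hs.le, ← Real.rpow_natCast s 3]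
      norm_num
    have hak : a k = 1 / s := rfl
    rw [e2, Real.cos_sq', hak]
    have hs' : s ≠ 0 := hs.ne'
    field_simp
    ring
  rw [Finset.sum_congr rfl hL]
  -- bound the RHS terms
  have hR : ∀ k ∈ Finset.Icc 1 (n - 1),
      1 / Real.sin (π * k / n) ≤ (a k + a (k + 1)) / 2 := by
    intro k hk
    obtain ⟨h1, h2⟩ := Finset.mem_Icc.mp hk
    have h2' : k ≤ n := by omega
    have h3 : 1 ≤ k + 1 := by omega
    have h4 : k + 1 ≤ n := by omega
    obtain ⟨hx0, hxp⟩ := hθ k h1 h2'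
    obtain ⟨hy0, hyp⟩ := hθ (k + 1) h3 h4
    have hmid : π * k / n
        = (π * (2 * (k:ℝ) - 1) / (2 * n) + π * (2 * ((k + 1 : ℕ):ℝ) - 1) / (2 * n)) / 2 := by
      have hn0' : (n:ℝ) ≠ 0 := ne_of_gt hn0
      push_cast
      field_simp
      ring
    rw [hmid]
    exact csc_midpoint hx0 hxp hy0 hyp
  have hRsum : ∑ k ∈ Finset.Icc 1 (n - 1), 1 / Real.sin (π * k / n)
      ≤ ∑ k ∈ Finset.Icc 1 (n - 1), (a k + a (k + 1)) / 2 :=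
    Finset.sum_le_sum hR
  -- sum manipulations
  have hshift := sum_shift a (n - 1)
  rw [show n - 1 + 1 = n by omega] at hshift
  have e1 : ∑ k ∈ Finset.Icc 1 n, a k = (∑ k ∈ Finset.Icc 1 (n - 1), a k) + a n := by
    nth_rewrite 1 [show n = n - 1 + 1 by omega]
    rw [Finset.sum_Icc_succ_top (by omega)]
    rw [show n - 1 + 1 = n by omega]
  have e2 : ∑ k ∈ Finset.Icc 1 n, a k = a 1 + ∑ k ∈ Finset.Icc 2 n, a k :=
    sum_head a n (by omega)
  set S := ∑ k ∈ Finset.Icc 1 n, a k with hS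
  have hmiddle : ∑ k ∈ Finset.Icc 1 (n - 1), (a k + a (k + 1)) / 2
      = S - (a 1 + a n) / 2 := by
    have h0 : ∑ k ∈ Finset.Icc 1 (n - 1), (a k + a (k + 1)) / 2
        = ((∑ k ∈ Finset.Icc 1 (n - 1), a k) + ∑ k ∈ Finset.Icc 1 (n - 1), a (k + 1)) / 2 := by
      rw [← Finset.sum_add_distrib, ← Finset.sum_div]
    rw [h0, hshift]
    have h1 : ∑ k ∈ Finset.Icc 1 (n - 1), a k = S - a n := by rw [e1]; ring
    have h2 : ∑ k ∈ Finset.Icc 2 n, a k = S - a 1 := by rw [e2]; ring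
    rw [h1, h2]; ring
  -- positivity of the per-term slack
  have hb : ∀ k ∈ Finset.Icc 1 n, 0 ≤ a k ^ 3 - 2 * a k + 1 := by
    intro k hk
    obtain ⟨h1, h2⟩ := Finset.mem_Icc.mp hk
    have hge := ha1 k h1 h2
    nlinarith [mul_nonneg (sub_nonneg.2 hge) (sq_nonneg (a k)), sq_nonneg (a k - 1)]
  have hbsum : a 1 ^ 3 - 2 * a 1 + 1 ≤ ∑ k ∈ Finset.Icc 1 n, (a k ^ 3 - 2 * a k + 1) :=
    Finset.single_le_sum hb (Finset.mem_Icc.mpr ⟨le_refl 1, by omega⟩)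
  have hcard : (Finset.Icc 1 n).card = n := by
    rw [Nat.card_Icc]; omega
  have hbsum' : ∑ k ∈ Finset.Icc 1 n, (a k ^ 3 - 2 * a k + 1)
      = (∑ k ∈ Finset.Icc 1 n, (a k ^ 3 - a k)) - S + n := by
    have h0 : ∑ k ∈ Finset.Icc 1 n, (a k ^ 3 - 2 * a k + 1)
        = ∑ k ∈ Finset.Icc 1 n, ((a k ^ 3 - a k) - a k + 1) := by
      apply Finset.sum_congr rfl; intros; ring
    rw [h0, Finset.sum_add_distrib, Finset.sum_sub_distrib, Finset.sum_const, hcard,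
      nsmul_eq_mul, mul_one, hS]
  -- lower bound on a 1
  have hA1 : 2 * (n:ℝ) / π < a 1 := by
    have hx : (0:ℝ) < π / (2 * n) := by positivity
    have hsl : Real.sin (π / (2 * n)) < π / (2 * n) := Real.sin_lt hx
    have hee : π * (2 * ((1:ℕ):ℝ) - 1) / (2 * (n:ℝ)) = π / (2 * n) := by norm_num
    have hss : 0 < Real.sin (π / (2 * n)) := by
      have := hsin 1 le_rfl (by omega)
      rwa [hee] at this
    have hA : a 1 = 1 / Real.sin (π / (2 * n)) := by
      have : a 1 = 1 / Real.sin (π * (2 * ((1:ℕ):ℝ) - 1) / (2 * n)) := rfl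
      rw [this, hee]
    rw [hA, div_lt_div_iff₀ hπ hss, one_mul]
    calc 2 * (n:ℝ) * Real.sin (π / (2 * n)) < 2 * n * (π / (2 * n)) := by
          exact mul_lt_mul_of_pos_left hsl (by linarith)
      _ = π := by field_simp
  have hπ315 : π < 3.15 := Real.pi_lt_d2
  have hA1' : 2 * (n:ℝ) < 3.15 * a 1 := by
    have h0 : (0:ℝ) < a 1 := by
      have := ha1 1 le_rfl (by omega); linarith
    have h1 : 2 * (n:ℝ) < a 1 * π := by
      rw [div_lt_iff₀ hπ] at hA1; linarith
    nlinarith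
  have hAn : 1 ≤ a n := ha1 n (by omega) le_rfl
  have hA11 : 1 ≤ a 1 := ha1 1 le_rfl (by omega)
  have hA19 : (1.9:ℝ) ≤ a 1 := by nlinarith
  have hfin : a 1 ^ 3 - 2 * a 1 + 1 + (a 1 + a n) / 2 - n > 0 := by
    nlinarith [mul_nonneg (sq_nonneg (a 1 - 1.9)) (by linarith : (0:ℝ) ≤ a 1),
      sq_nonneg (a 1 - 1.9)]
  calc ∑ k ∈ Finset.Icc 1 (n - 1), 1 / Real.sin (π * k / n)
      ≤ S - (a 1 + a n) / 2 := by rw [← hmiddle]; exact hRsum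
    _ < ∑ k ∈ Finset.Icc 1 n, (a k ^ 3 - a k) := by linarith [hbsum, hbsum', hfin]
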